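/- If F is a graph with no isolated vertices that is neither a complete graph nor a complete multipartite graph, then cex(n,F) = Ω(n^{3/2}); that is, there exist a constant c > 0 and N such that cex(n,F) ≥ c·n^{3/2} for all n ≥ N. -/

import Mathlib

open SimpleGraph Finset

/-- A decomposition of `G` into pairwise edge-disjoint (not necessarily induced) copies of `F`
covering all edges of `G`: every edge of `G` lies in the edge set of exactly one copy. -/
def HasDecompositionInto {α β : Type} (F : SimpleGraph α) (G : SimpleGraph β) : Prop :=
  ∃ (ι : Type) (c : ι → α → β),
    (∀ t, Function.Injective (c t)) ∧
    (∀ t u v, F.Adj u v → G.Adj (c t u) (c t v)) ∧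
    ∀ e ∈ G.edgeSet, ∃! t : ι, ∃ u v, F.Adj u v ∧ e = s(c t u, c t v)

/-- A decomposition of `G` into pairwise edge-disjoint *induced* copies of `F`
covering all edges of `G`. -/
def HasInducedDecompositionInto {α β : Type} (F : SimpleGraph α) (G : SimpleGraph β) : Prop :=
  ∃ (ι : Type) (c : ι → α → β),
    (∀ t, Function.Injective (c t)) ∧
    (∀ t u v, F.Adj u v ↔ G.Adj (c t u) (c t v)) ∧
    ∀ e ∈ G.edgeSet, ∃! t : ι, ∃ u v, F.Adj u v ∧ e = s(c t u, c t v)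

/-- `ex(n,F)`: the maximum number of edges of a graph on `n` vertices admitting
an induced `F`-decomposition. -/
noncomputable def exInd {α : Type} (F : SimpleGraph α) (n : ℕ) : ℕ :=
  sSup {m | ∃ G : SimpleGraph (Fin n), HasInducedDecompositionInto F G ∧ G.edgeSet.ncard = m}

/-- `cex(n,F) = C(n,2) - ex(n,F)`. -/
noncomputable def cex {α : Type} (F : SimpleGraph α) (n : ℕ) : ℕ :=
  n.choose 2 - exInd F n

/-- If `F` is not complete multipartite, it has an induced `co-P3`: an edge `ab` together
with a vertex `z` adjacent to neither endpoint. -/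
lemma exists_coP3 {V : Type} [Fintype V] (F : SimpleGraph V)
    (hncm : ¬ ∃ (k : ℕ) (a : Fin k → ℕ),
        Nonempty (F ≃g completeMultipartiteGraph fun i : Fin k => Fin (a i))) :
    ∃ a b z : V, F.Adj a b ∧ ¬F.Adj a z ∧ ¬F.Adj b z := by
  classical
  by_contra h
  push_neg at h
  apply hncm
  -- the relation "non-adjacent" is an equivalence relation
  let S : Setoid V := ⟨fun u v => ¬F.Adj u v,
    ⟨fun u => F.irrefl, fun {u v} h1 h2 => h1 h2.symm,
     fun {x y z} hxy hyz hxz => hyz ((h x z y hxz hxy).symm)⟩⟩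
  letI : DecidableRel S.r := fun _ _ => Classical.dec _
  letI : DecidableEq (Quotient S) := Classical.decEq _
  letI : Fintype (Quotient S) := Quotient.fintype S
  set k := Fintype.card (Quotient S) with hk
  set eQ : Quotient S ≃ Fin k := Fintype.equivFin (Quotient S) with heQ
  refine ⟨k, fun i => Fintype.card {v : V // Quotient.mk S v = eQ.symm i}, ⟨?_⟩⟩
  have fibEquiv : ∀ q : Quotient S,
      {v : V // Quotient.mk S v = q} ≃
        Fin (Fintype.card {v : V // Quotient.mk S v = eQ.symm (eQ q)}) := by
    intro q
    apply Fintype.equivFinOfCardEq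
    apply Fintype.card_congr
    exact Equiv.subtypeEquivRight (fun v => by rw [eQ.symm_apply_apply])
  let e : V ≃ Σ i : Fin k, Fin (Fintype.card {v : V // Quotient.mk S v = eQ.symm i}) :=
    (Equiv.sigmaFiberEquiv (fun v => Quotient.mk S v)).symm.trans
      (Equiv.sigmaCongr eQ fibEquiv)
  have he1 : ∀ v : V, (e v).1 = eQ (Quotient.mk S v) := fun v => rfl
  refine ⟨e, ?_⟩
  intro u v
  show (completeMultipartiteGraph _).Adj (e u) (e v) ↔ F.Adj u v
  have hiff : (completeMultipartiteGraph fun i : Fin k =>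
      Fin (Fintype.card {v : V // Quotient.mk S v = eQ.symm i})).Adj (e u) (e v) ↔
        (e u).1 ≠ (e v).1 := Iff.rfl
  rw [hiff, he1, he1, ne_eq, Equiv.apply_eq_iff_eq, Quotient.eq]
  exact not_not

/-- The main counting lemma: if `G` on `n` vertices has an induced decomposition into copies of
`F`, where `F` has an induced co-P3 `a,b,z` and `z` is not isolated, then the number of
non-edges of `G` is at least roughly `n^{3/2}`. -/
lemma key_count {V : Type} [Fintype V] (F : SimpleGraph V) {a b z w : V}
    (hab : F.Adj a b) (haz : ¬F.Adj a z) (hbz : ¬F.Adj b z) (hzw : F.Adj z w)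
    {n : ℕ} {G : SimpleGraph (Fin n)} (hd : HasInducedDecompositionInto F G) :
    n.choose 2 ≤ (n.choose 2 - G.edgeSet.ncard) * (2 * (Nat.sqrt n + 1) * F.edgeSet.ncard + 1) := by
  classical
  obtain ⟨ι, c, hinj, hadj, huniq⟩ := hd
  have hza : z ≠ a := fun h => hbz (h ▸ hab.symm)
  have hzb : z ≠ b := fun h => haz (h ▸ hab)
  -- uniqueness of the copy containing a given edge
  have hcopy : ∀ (t t' : ι) (u v u' v' : V), F.Adj u v → F.Adj u' v' →
      s(c t u, c t v) = s(c t' u', c t' v') → t = t' := by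
    intro t t' u v u' v' huv hu'v' hee
    have he : s(c t u, c t v) ∈ G.edgeSet := by
      rw [mem_edgeSet]; exact (hadj t u v).1 huv
    obtain ⟨t₀, _, hun⟩ := huniq _ he
    exact (hun t ⟨u, v, huv, rfl⟩).trans (hun t' ⟨u', v', hu'v', hee⟩).symm
  have hfinι : Finite ι := by
    apply Finite.of_injective (fun t => s(c t a, c t b))
    intro t t' h
    exact hcopy t t' a b a b hab hab h
  haveI : Fintype ι := Fintype.ofFinite ι
  set sq := Nat.sqrt n + 1 with hsq
  set T := Fintype.card ι with hT
  set eF := F.edgeFinset.card with heF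
  set eG := G.edgeFinset.card with heG
  set d := Gᶜ.edgeFinset.card with hdd
  -- (1) eG + d = n.choose 2
  have hsum : eG + d = n.choose 2 := by
    have hdisj : Disjoint G.edgeFinset Gᶜ.edgeFinset :=
      disjoint_edgeFinset.2 disjoint_compl_right
    have hun : G.edgeFinset ∪ Gᶜ.edgeFinset = (⊤ : SimpleGraph (Fin n)).edgeFinset := by
      ext e
      refine Sym2.ind (fun x y => ?_) e
      simp only [Finset.mem_union, mem_edgeFinset, mem_edgeSet, compl_adj, top_adj]
      constructor
      · rintro (h | ⟨h, -⟩)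
        · exact h.ne
        · exact h
      · intro h
        by_cases hg : G.Adj x y
        · exact Or.inl hg
        · exact Or.inr ⟨h, hg⟩
    have htop := card_edgeFinset_top_eq_card_choose_two (V := Fin n)
    rw [heG, hdd, ← Finset.card_union_of_disjoint hdisj, hun, htop]
    simp
  -- (2) eG ≤ T * eF
  have h2 : eG ≤ T * eF := by
    have hsub : G.edgeFinset ⊆
        (Finset.univ ×ˢ F.edgeFinset).image (fun p : ι × Sym2 V => p.2.map (c p.1)) := by
      intro e he
      obtain ⟨t, ⟨u, v, huv, heq⟩, -⟩ := huniq e (mem_edgeFinset.1 he)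
      refine Finset.mem_image.2 ⟨(t, s(u, v)), ?_, ?_⟩
      · exact Finset.mem_product.2 ⟨Finset.mem_univ _, mem_edgeFinset.2 (F.mem_edgeSet.2 huv)⟩
      · simp [Sym2.map_pair_eq, heq]
    calc eG ≤ ((Finset.univ ×ˢ F.edgeFinset).image
          (fun p : ι × Sym2 V => p.2.map (c p.1))).card := Finset.card_le_card hsub
      _ ≤ (Finset.univ ×ˢ F.edgeFinset).card := Finset.card_image_le
      _ = T * eF := by rw [Finset.card_product, Finset.card_univ]
  -- (3) T ≤ sq * (2 * d)
  have h3 : T ≤ sq * (2 * d) := by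
    have hsplit : T = ∑ x : Fin n, (Finset.univ.filter fun t : ι => c t z = x).card := by
      rw [hT, ← Finset.card_univ]
      exact Finset.card_eq_sum_card_fiberwise (fun x _ => Finset.mem_univ _)
    have hfib : ∀ x : Fin n, (Finset.univ.filter fun t : ι => c t z = x).card
        ≤ sq * Gᶜ.degree x := by
      intro x
      by_cases hc : sq ≤ Gᶜ.degree x
      · -- use that the copies through x each use an edge at x
        have h1 : (Finset.univ.filter fun t : ι => c t z = x).card
            ≤ (G.incidenceFinset x).card := by
          apply Finset.card_le_card_of_injOn (fun t => s(c t z, c t w))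
          · intro t ht
            have htz : c t z = x := (Finset.mem_filter.1 ht).2
            rw [Finset.mem_coe, mem_incidenceFinset]
            exact ⟨G.mem_edgeSet.2 ((hadj t z w).1 hzw), by dsimp only; rw [htz]; exact Sym2.mem_mk_left x _⟩
          · intro t ht t' ht' hh
            exact hcopy t t' z w z w hzw hzw hh
        have h3' : G.degree x < n := by
          have := G.degree_lt_card_verts x
          simpa using this
        calc (Finset.univ.filter fun t : ι => c t z = x).card
            ≤ G.degree x := by rw [← card_incidenceFinset_eq_degree]; exact h1
          _ ≤ n := h3'.le
          _ ≤ sq * sq := (Nat.lt_succ_sqrt n).le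
          _ ≤ sq * Gᶜ.degree x := Nat.mul_le_mul_left _ hc
      · push_neg at hc
        have h1 : (Finset.univ.filter fun t : ι => c t z = x).card
            ≤ ((Gᶜ.neighborFinset x) ×ˢ (Gᶜ.neighborFinset x)).card := by
          apply Finset.card_le_card_of_injOn (fun t => (c t a, c t b))
          · intro t ht
            have htz : c t z = x := (Finset.mem_filter.1 ht).2
            have hxa : Gᶜ.Adj x (c t a) := by
              rw [compl_adj]
              refine ⟨by rw [← htz]; exact fun h => hza ((hinj t) h), ?_⟩
              rw [← htz]
              exact fun hg => haz ((hadj t z a).2 hg).symm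
            have hxb : Gᶜ.Adj x (c t b) := by
              rw [compl_adj]
              refine ⟨by rw [← htz]; exact fun h => hzb ((hinj t) h), ?_⟩
              rw [← htz]
              exact fun hg => hbz ((hadj t z b).2 hg).symm
            exact Finset.mem_product.2 ⟨(mem_neighborFinset _ _ _).2 hxa,
              (mem_neighborFinset _ _ _).2 hxb⟩
          · intro t ht t' ht' hh
            have h1 : c t a = c t' a := congrArg Prod.fst hh
            have h2 : c t b = c t' b := congrArg Prod.snd hh
            exact hcopy t t' a b a b hab hab (by rw [h1, h2])
        calc (Finset.univ.filter fun t : ι => c t z = x).card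
            ≤ Gᶜ.degree x * Gᶜ.degree x := by
              rwa [Finset.card_product, Gᶜ.card_neighborFinset_eq_degree] at h1
          _ ≤ sq * Gᶜ.degree x := Nat.mul_le_mul_right _ hc.le
    calc T = ∑ x : Fin n, (Finset.univ.filter fun t : ι => c t z = x).card := hsplit
      _ ≤ ∑ x : Fin n, sq * Gᶜ.degree x := Finset.sum_le_sum (fun x _ => hfib x)
      _ = sq * ∑ x : Fin n, Gᶜ.degree x := (Finset.mul_sum _ _ _).symm
      _ = sq * (2 * d) := by rw [Gᶜ.sum_degrees_eq_twice_card_edges]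
  -- combine
  have hGn : G.edgeSet.ncard = eG := by
    rw [Set.ncard_eq_toFinset_card']
    rw [heG]; congr 1
  have hFn : F.edgeSet.ncard = eF := by
    rw [Set.ncard_eq_toFinset_card']
    rw [heF]; congr 1
  have hdm : n.choose 2 - G.edgeSet.ncard = d := by omega
  rw [hdm, hFn]
  calc n.choose 2 = eG + d := hsum.symm
    _ ≤ T * eF + d := by omega
    _ ≤ (sq * (2 * d)) * eF + d := Nat.add_le_add_right (Nat.mul_le_mul_right _ h3) _
    _ = d * (2 * sq * eF + 1) := by ring

/-- If `F` has no isolated vertices and is neither complete nor complete multipartite,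
then `cex(n,F) = Ω(n^{3/2})`. -/
theorem cex_omega_three_halves {V : Type} [Fintype V] (F : SimpleGraph V)
    (hiso : ∀ v : V, ∃ u : V, F.Adj v u) (hnc : F ≠ ⊤)
    (hncm : ¬ ∃ (k : ℕ) (a : Fin k → ℕ),
        Nonempty (F ≃g completeMultipartiteGraph fun i : Fin k => Fin (a i))) :
    ∃ c : ℝ, 0 < c ∧ ∃ N : ℕ, ∀ n : ℕ, N ≤ n →
      c * (n : ℝ) ^ (3 / 2 : ℝ) ≤ (cex F n : ℝ) := by
  classical
  obtain ⟨a, b, z, hab, haz, hbz⟩ := exists_coP3 F hncm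
  obtain ⟨w, hzw⟩ := hiso z
  set eF := F.edgeSet.ncard with heFdef
  have heF1 : 1 ≤ eF := by
    have hne : F.edgeSet.Nonempty := ⟨s(a, b), F.mem_edgeSet.2 hab⟩
    have := (Set.ncard_pos (Set.toFinite _)).2 hne
    omega
  refine ⟨1 / (20 * eF), by positivity, 2, ?_⟩
  intro n hn
  -- the supremum is attained
  have hmemS : exInd F n ∈
      {m | ∃ G : SimpleGraph (Fin n), HasInducedDecompositionInto F G ∧ G.edgeSet.ncard = m} := by
    apply Nat.sSup_mem
    · refine ⟨0, ⊥, ⟨Empty, fun t => t.elim, fun t => t.elim, fun t => t.elim, ?_⟩, by simp⟩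
      intro e he
      simp at he
    · refine ⟨n.choose 2, ?_⟩
      rintro m ⟨G, -, rfl⟩
      rw [Set.ncard_eq_toFinset_card']
      have := G.card_edgeFinset_le_card_choose_two
      convert this using 2; ext; simp
      simp
  obtain ⟨G, hdec, hcard⟩ := hmemS
  have hkey := key_count F hab haz hbz hzw hdec
  have hcexd : cex F n = n.choose 2 - G.edgeSet.ncard := by rw [cex, hcard]
  rw [← hcexd] at hkey
  -- now pass to the reals
  set d := cex F n with hddef
  have hnR : (2 : ℝ) ≤ (n : ℝ) := by exact_mod_cast hn
  have hnpos : (0 : ℝ) < (n : ℝ) := by linarith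
  have hrpow : (n : ℝ) ^ (3 / 2 : ℝ) = (n : ℝ) * Real.sqrt n := by
    rw [Real.sqrt_eq_rpow, show (3 / 2 : ℝ) = 1 + 1 / 2 by norm_num,
      Real.rpow_add hnpos, Real.rpow_one]
  have hsq1 : (1 : ℝ) ≤ Real.sqrt n := by
    have h := Real.sqrt_le_sqrt (show (1 : ℝ) ≤ (n : ℝ) by linarith)
    rwa [Real.sqrt_one] at h
  have hss : Real.sqrt n * Real.sqrt n = (n : ℝ) := Real.mul_self_sqrt hnpos.le
  have hns : ((Nat.sqrt n : ℕ) : ℝ) ≤ Real.sqrt n := Real.nat_sqrt_le_real_sqrt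
  have hkeyR : (n : ℝ) * ((n : ℝ) - 1) / 2
      ≤ (d : ℝ) * (2 * (((Nat.sqrt n : ℕ) : ℝ) + 1) * (eF : ℝ) + 1) := by
    have hch : ((n.choose 2 : ℕ) : ℝ) = (n : ℝ) * ((n : ℝ) - 1) / 2 := Nat.cast_choose_two (K := ℝ) n
    rw [← hch]
    exact_mod_cast hkey
  have heFR : (1 : ℝ) ≤ (eF : ℝ) := by exact_mod_cast heF1
  have hdR : (0 : ℝ) ≤ (d : ℝ) := Nat.cast_nonneg _
  rw [hrpow, div_mul_eq_mul_div, one_mul, div_le_iff₀ (by positivity)]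
  -- goal : n * sqrt n ≤ d * (20 * eF)
  have h5 : 2 * (((Nat.sqrt n : ℕ) : ℝ) + 1) * (eF : ℝ) + 1 ≤ 5 * (eF : ℝ) * Real.sqrt n := by
    nlinarith [hns, hsq1, heFR]
  have h6 : (n : ℝ) * ((n : ℝ) - 1) / 2 ≤ (d : ℝ) * (5 * (eF : ℝ) * Real.sqrt n) :=
    le_trans hkeyR (mul_le_mul_of_nonneg_left h5 hdR)
  have h7 := mul_le_mul_of_nonneg_left h6 (Real.sqrt_nonneg n)
  nlinarith [h7, hss, hnR, hsq1, hdR, heFR, hnpos]
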